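/- For the Ising partition function Z_n on the Sierpinski gasket of stage n, defined by Z_n = 2U_n + 6V_n with the standard recursion, the function y^{3^n} Z_n(y) / 2 is a monic polynomial in y^4 of degree 3^n (as a polynomial in x = y^4). -/
import Mathlib

noncomputable def UV : ℕ → ((ℂ → ℂ) × (ℂ → ℂ))
  | 0 => (fun y => y ^ 3, fun y => y⁻¹)
  | n + 1 =>
    (fun y => (UV n).1 y ^ 3 + 3 * (UV n).1 y * (UV n).2 y ^ 2 + 4 * (UV n).2 y ^ 3,
     fun y => (UV n).1 y ^ 2 * (UV n).2 y + 4 * (UV n).1 y * (UV n).2 y ^ 2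
       + 3 * (UV n).2 y ^ 3)

noncomputable def Z (n : ℕ) (y : ℂ) : ℂ := 2 * (UV n).1 y + 6 * (UV n).2 y

noncomputable def AB : ℕ → (Polynomial ℤ × Polynomial ℤ)
  | 0 => (Polynomial.X, 1)
  | n + 1 =>
    ((AB n).1 ^ 3 + 3 * (AB n).1 * (AB n).2 ^ 2 + 4 * (AB n).2 ^ 3,
     (AB n).1 ^ 2 * (AB n).2 + 4 * (AB n).1 * (AB n).2 ^ 2 + 3 * (AB n).2 ^ 3)

open Polynomial in
lemma AB_inv (n : ℕ) :
    (AB n).1.Monic ∧ (AB n).2.Monic ∧ (AB n).1.natDegree = 3 ^ n ∧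
      (AB n).2.natDegree = 3 ^ n - 1 ∧
      ∀ y : ℂ, y ≠ 0 →
        y ^ (3 ^ n) * (UV n).1 y = Polynomial.aeval (y ^ 4) (AB n).1 ∧
        y ^ (3 ^ n) * (UV n).2 y = Polynomial.aeval (y ^ 4) (AB n).2 := by
  induction n with
  | zero =>
    refine ⟨monic_X, monic_one, by simp [AB], by simp [AB], ?_⟩
    intro y hy
    constructor
    · show y ^ 1 * y ^ 3 = Polynomial.aeval (y ^ 4) (AB 0).1
      simp [AB]; ring
    · show y ^ 1 * y⁻¹ = Polynomial.aeval (y ^ 4) (AB 0).2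
      simp [AB]
      field_simp
  | succ n ih =>
    obtain ⟨hA, hB, hdA, hdB, heval⟩ := ih
    set A := (AB n).1 with hAdef
    set B := (AB n).2 with hBdef
    have hA0 : A ≠ 0 := hA.ne_zero
    have hB0 : B ≠ 0 := hB.ne_zero
    have h3 : (3 : Polynomial ℤ) ≠ 0 := by norm_num
    have h4 : (4 : Polynomial ℤ) ≠ 0 := by norm_num
    have hone : 1 ≤ 3 ^ n := Nat.one_le_pow _ _ (by norm_num)
    have hblea : B.natDegree < A.natDegree := by rw [hdA, hdB]; omega
    have d1 : (3 * A * B ^ 2).natDegree = A.natDegree + 2 * B.natDegree := by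
      rw [natDegree_mul (mul_ne_zero h3 hA0) (pow_ne_zero 2 hB0),
        natDegree_mul h3 hA0, natDegree_pow, natDegree_ofNat]
      ring
    have d2 : (4 * B ^ 3).natDegree = 3 * B.natDegree := by
      rw [natDegree_mul h4 (pow_ne_zero 3 hB0), natDegree_pow, natDegree_ofNat]
      ring
    have d3 : (A ^ 2 * B).natDegree = 2 * A.natDegree + B.natDegree := by
      rw [natDegree_mul (pow_ne_zero 2 hA0) hB0, natDegree_pow]
    have d4 : (4 * A * B ^ 2).natDegree = A.natDegree + 2 * B.natDegree := by
      rw [natDegree_mul (mul_ne_zero h4 hA0) (pow_ne_zero 2 hB0),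
        natDegree_mul h4 hA0, natDegree_pow, natDegree_ofNat]
      ring
    have d5 : (3 * B ^ 3).natDegree = 3 * B.natDegree := by
      rw [natDegree_mul h3 (pow_ne_zero 3 hB0), natDegree_pow, natDegree_ofNat]
      ring
    have hAeq : (AB (n+1)).1 = A ^ 3 + (3 * A * B ^ 2 + 4 * B ^ 3) := by
      show A ^ 3 + 3 * A * B ^ 2 + 4 * B ^ 3 = _
      ring
    have hBeq : (AB (n+1)).2 = A ^ 2 * B + (4 * A * B ^ 2 + 3 * B ^ 3) := by
      show A ^ 2 * B + 4 * A * B ^ 2 + 3 * B ^ 3 = _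
      ring
    have hltA : (3 * A * B ^ 2 + 4 * B ^ 3).degree < (A ^ 3).degree := by
      apply lt_of_le_of_lt (degree_add_le _ _)
      apply max_lt <;>
      · apply degree_lt_degree
        rw [natDegree_pow]
        omega
    have hltB : (4 * A * B ^ 2 + 3 * B ^ 3).degree < (A ^ 2 * B).degree := by
      apply lt_of_le_of_lt (degree_add_le _ _)
      apply max_lt <;>
      · apply degree_lt_degree
        rw [d3]
        omega
    refine ⟨?_, ?_, ?_, ?_, ?_⟩
    · rw [hAeq]; exact (hA.pow 3).add_of_left hltA
    · rw [hBeq]; exact ((hA.pow 2).mul hB).add_of_left hltB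
    · rw [hAeq, natDegree_add_eq_left_of_degree_lt hltA, natDegree_pow, hdA]
      ring
    · rw [hBeq, natDegree_add_eq_left_of_degree_lt hltB, d3, hdA, hdB]
      omega
    · intro y hy
      obtain ⟨hu, hv⟩ := heval y hy
      have hp : y ^ 3 ^ (n+1) = (y ^ 3 ^ n) ^ 3 := by
        rw [← pow_mul, ← pow_succ]
      constructor
      · show y ^ 3 ^ (n+1) * ((UV n).1 y ^ 3 + 3 * (UV n).1 y * (UV n).2 y ^ 2
            + 4 * (UV n).2 y ^ 3) = Polynomial.aeval (y ^ 4) (AB (n+1)).1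
        rw [hAeq]
        simp only [map_add, map_mul, map_pow, map_ofNat]
        rw [← hu, ← hv, hp]
        ring
      · show y ^ 3 ^ (n+1) * ((UV n).1 y ^ 2 * (UV n).2 y
            + 4 * (UV n).1 y * (UV n).2 y ^ 2 + 3 * (UV n).2 y ^ 3)
            = Polynomial.aeval (y ^ 4) (AB (n+1)).2
        rw [hBeq]
        simp only [map_add, map_mul, map_pow, map_ofNat]
        rw [← hu, ← hv, hp]
        ring

theorem stmt3 (n : ℕ) :
    ∃ P : Polynomial ℤ, P.Monic ∧ P.natDegree = 3 ^ n ∧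
      ∀ y : ℂ, y ≠ 0 → y ^ (3 ^ n) * Z n y / 2 = Polynomial.aeval (y ^ 4) P := by
  obtain ⟨hA, hB, hdA, hdB, heval⟩ := AB_inv n
  have hone : 1 ≤ 3 ^ n := Nat.one_le_pow _ _ (by norm_num)
  have hB0 : (AB n).2 ≠ 0 := hB.ne_zero
  have hd3B : (3 * (AB n).2).natDegree = (AB n).2.natDegree := by
    rw [Polynomial.natDegree_mul (by norm_num) hB0, Polynomial.natDegree_ofNat]
    ring
  have hlt : (3 * (AB n).2).degree < (AB n).1.degree := by
    apply Polynomial.degree_lt_degree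
    rw [hd3B, hdA, hdB]
    omega
  refine ⟨(AB n).1 + 3 * (AB n).2, hA.add_of_left hlt, ?_, ?_⟩
  · rw [Polynomial.natDegree_add_eq_left_of_degree_lt hlt, hdA]
  · intro y hy
    obtain ⟨hu, hv⟩ := heval y hy
    have : y ^ 3 ^ n * Z n y / 2
        = y ^ 3 ^ n * (UV n).1 y + 3 * (y ^ 3 ^ n * (UV n).2 y) := by
      unfold Z; ring
    rw [this, hu, hv]
    simp only [map_add, map_mul, map_ofNat]
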